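/- Consider a simple bipartite graph with M left-vertices, each of degree exactly c, and N right-vertices, each of degree exactly d (so cM = dN). Choose a uniformly random k-element subset of the left-vertices and, independently, a uniformly random ℓ-element subset of the right-vertices (where 1 ≤ k ≤ M and 1 ≤ ℓ ≤ N), and let H be the induced subgraph on these chosen vertices. Then Pr[H contains at least one edge] ≥ (ckℓ/N)·(1 − c²k²/N − ckℓ/N). -/

import Mathlib

open Finset

lemma count_superset {α : Type*} [DecidableEq α] (s t : Finset α) (h : t ⊆ s) (r : ℕ)
    (hr : t.card ≤ r) :
    ((s.powersetCard r).filter fun u => t ⊆ u).card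
      = (s.card - t.card).choose (r - t.card) := by
  rw [← Finset.card_sdiff_of_subset h, ← Finset.card_powersetCard]
  apply Finset.card_bij' (fun u _ => u \ t) (fun v _ => v ∪ t)
  · intro u hu
    simp only [Finset.mem_filter, Finset.mem_powersetCard] at hu
    rw [Finset.mem_powersetCard]
    exact ⟨Finset.sdiff_subset_sdiff hu.1.1 le_rfl,
      by rw [Finset.card_sdiff_of_subset hu.2, hu.1.2]⟩
  · intro v hv
    rw [Finset.mem_powersetCard] at hv
    have hdisj : Disjoint v t := Finset.disjoint_of_subset_left hv.1 Finset.sdiff_disjoint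
    simp only [Finset.mem_filter, Finset.mem_powersetCard]
    refine ⟨⟨Finset.union_subset (hv.1.trans (Finset.sdiff_subset)) h, ?_⟩,
      Finset.subset_union_right⟩
    rw [Finset.card_union_of_disjoint hdisj, hv.2]
    omega
  · intro u hu
    simp only [Finset.mem_filter] at hu
    exact Finset.sdiff_union_of_subset hu.2
  · intro v hv
    rw [Finset.mem_powersetCard] at hv
    have hdisj : Disjoint v t := Finset.disjoint_of_subset_left hv.1 Finset.sdiff_disjoint
    rw [Finset.union_sdiff_right, Finset.sdiff_eq_self_of_disjoint hdisj]

lemma count_superset_zero {α : Type*} [DecidableEq α] (s t : Finset α) (r : ℕ)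
    (hr : r < t.card) :
    ((s.powersetCard r).filter fun u => t ⊆ u).card = 0 := by
  rw [Finset.card_eq_zero, Finset.filter_eq_empty_iff]
  intro u hu htu
  rw [Finset.mem_powersetCard] at hu
  have := Finset.card_le_card htu
  omega

lemma choose_mul_id (n r : ℕ) (hn : 1 ≤ n) (hr : 1 ≤ r) :
    (n - 1).choose (r - 1) * n = n.choose r * r := by
  obtain ⟨n', rfl⟩ : ∃ n', n = n' + 1 := ⟨n - 1, by omega⟩
  obtain ⟨r', rfl⟩ : ∃ r', r = r' + 1 := ⟨r - 1, by omega⟩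
  have := Nat.add_one_mul_choose_eq n' r'
  simp only [Nat.add_sub_cancel]
  rw [Nat.mul_comm (n'.choose r')]
  exact this

lemma count_single (n r : ℕ) (hr : 1 ≤ r) (hrn : r ≤ n) (a : Fin n) :
    (((univ : Finset (Fin n)).powersetCard r).filter fun s => a ∈ s).card * n
      = n.choose r * r := by
  have hfe : (((univ : Finset (Fin n)).powersetCard r).filter fun s => a ∈ s)
      = ((univ : Finset (Fin n)).powersetCard r).filter fun s => {a} ⊆ s := by
    apply Finset.filter_congr
    intro s _
    simp
  rw [hfe, count_superset _ _ (Finset.subset_univ _) r (by simpa using hr)]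
  simpa using choose_mul_id n r (by omega) hr

lemma count_pair (n r : ℕ) (hr : 1 ≤ r) (hrn : r ≤ n) (t : Finset (Fin n)) (ht : t.card = 2) :
    (((univ : Finset (Fin n)).powersetCard r).filter fun s => t ⊆ s).card * n ^ 2
      ≤ n.choose r * r ^ 2 := by
  rcases Nat.lt_or_ge r 2 with h2 | h2
  · rw [count_superset_zero _ _ _ (by omega)]
    simp
  · have hn2 : 2 ≤ n := le_trans h2 hrn
    rw [count_superset _ _ (Finset.subset_univ _) r (by omega), card_univ, Fintype.card_fin, ht]
    obtain ⟨n', rfl⟩ : ∃ n', n = n' + 2 := ⟨n - 2, by omega⟩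
    obtain ⟨r', rfl⟩ : ∃ r', r = r' + 2 := ⟨r - 2, by omega⟩
    simp only [Nat.add_sub_cancel]
    have e1 : n'.choose r' * (n' + 1) = (n' + 1).choose (r' + 1) * (r' + 1) := by
      simpa using choose_mul_id (n' + 1) (r' + 1) (by omega) (by omega)
    have e2 : (n' + 1).choose (r' + 1) * (n' + 2) = (n' + 2).choose (r' + 2) * (r' + 2) := by
      simpa using choose_mul_id (n' + 2) (r' + 2) (by omega) (by omega)
    have mono : n'.choose r' ≤ (n' + 1).choose (r' + 1) := by
      rw [Nat.choose_succ_succ]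
      exact Nat.le_add_right _ _
    nlinarith [e1, e2, mono]

lemma ite_one_mul_ite_one (P Q : Prop) [Decidable P] [Decidable Q] :
    (if P ∧ Q then (1 : ℕ) else 0) = (if P then 1 else 0) * (if Q then 1 else 0) := by
  by_cases hP : P <;> by_cases hQ : Q <;> simp [hP, hQ]

lemma bonferroni {α β : Type*} (s : Finset α) (t : Finset β)
    (R : α → β → Prop) [∀ a b, Decidable (R a b)] :
    3 * ∑ a ∈ s, (t.filter fun b => R a b).card ≤
      2 * (t.filter fun b => ∃ a ∈ s, R a b).card +
        ∑ a ∈ s, ∑ a' ∈ s, (t.filter fun b => R a b ∧ R a' b).card := by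
  have h1 : ∑ a ∈ s, (t.filter fun b => R a b).card
      = ∑ b ∈ t, (s.filter fun a => R a b).card := by
    simp only [Finset.card_filter]; exact Finset.sum_comm
  have h2 : ∑ a ∈ s, ∑ a' ∈ s, (t.filter fun b => R a b ∧ R a' b).card
      = ∑ b ∈ t, ((s.filter fun a => R a b).card * (s.filter fun a => R a b).card) := by
    simp only [Finset.card_filter]
    calc ∑ a ∈ s, ∑ a' ∈ s, ∑ b ∈ t, (if R a b ∧ R a' b then 1 else 0)
        = ∑ a ∈ s, ∑ b ∈ t, ∑ a' ∈ s, (if R a b ∧ R a' b then 1 else 0) :=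
          Finset.sum_congr rfl fun a _ => Finset.sum_comm
      _ = ∑ b ∈ t, ∑ a ∈ s, ∑ a' ∈ s, (if R a b ∧ R a' b then 1 else 0) := Finset.sum_comm
      _ = ∑ b ∈ t, ((∑ a ∈ s, if R a b then 1 else 0) * ∑ a' ∈ s, if R a' b then 1 else 0) := by
          refine Finset.sum_congr rfl fun b _ => ?_
          rw [Finset.sum_mul_sum]
          exact Finset.sum_congr rfl fun a _ => Finset.sum_congr rfl fun a' _ =>
            ite_one_mul_ite_one _ _
  have h3 : (t.filter fun b => ∃ a ∈ s, R a b).card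
      = ∑ b ∈ t, if 0 < (s.filter fun a => R a b).card then 1 else 0 := by
    rw [Finset.card_filter]
    simp only [Finset.card_pos, Finset.filter_nonempty_iff]
  rw [h1, h2, h3, Finset.mul_sum, Finset.mul_sum, ← Finset.sum_add_distrib]
  refine Finset.sum_le_sum fun b _ => ?_
  generalize (s.filter fun a => R a b).card = m
  rcases Nat.eq_zero_or_pos m with h | h
  · simp [h]
  · rw [if_pos h]
    rcases Nat.lt_or_ge m 2 with h2 | h2
    · interval_cases m
      norm_num
    · zify
      have hm2 : (2:ℤ) ≤ (m:ℤ) := by exact_mod_cast h2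
      nlinarith [mul_nonneg (show (0:ℤ) ≤ (m:ℤ) - 1 by linarith)
        (show (0:ℤ) ≤ (m:ℤ) - 2 by linarith)]

lemma fiberL {M N : ℕ} (E : Fin M → Fin N → Bool) (i : Fin M) :
    (((univ : Finset (Fin M × Fin N)).filter fun e => E e.1 e.2).filter
      fun f => f.1 = i).card = (univ.filter fun j => E i j).card := by
  refine Finset.card_nbij' (fun f => f.2) (fun j => (i, j)) ?_ ?_ ?_ ?_
  · intro f hf
    simp only [Finset.mem_coe, Finset.mem_filter, Finset.mem_univ, true_and] at hf ⊢
    rw [← hf.2]; exact hf.1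
  · intro j hj
    simp only [Finset.mem_coe, Finset.mem_filter, Finset.mem_univ, true_and] at hj ⊢
    exact ⟨hj, trivial⟩
  · intro f hf
    simp only [Finset.mem_coe, Finset.mem_filter] at hf
    exact Prod.ext hf.2.symm rfl
  · intro j _
    rfl

lemma fiberR {M N : ℕ} (E : Fin M → Fin N → Bool) (j : Fin N) :
    (((univ : Finset (Fin M × Fin N)).filter fun e => E e.1 e.2).filter
      fun f => f.2 = j).card = (univ.filter fun i => E i j).card := by
  refine Finset.card_nbij' (fun f => f.1) (fun i => (i, j)) ?_ ?_ ?_ ?_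
  · intro f hf
    simp only [Finset.mem_coe, Finset.mem_filter, Finset.mem_univ, true_and] at hf ⊢
    rw [← hf.2]; exact hf.1
  · intro i hi
    simp only [Finset.mem_coe, Finset.mem_filter, Finset.mem_univ, true_and] at hi ⊢
    exact ⟨hi, trivial⟩
  · intro f hf
    simp only [Finset.mem_coe, Finset.mem_filter] at hf
    exact Prod.ext rfl hf.2.symm
  · intro i _
    rfl

lemma final_arith (M N c d k l CM CN B : ℝ)
    (hc : 1 ≤ c) (hk : 1 ≤ k) (hl : 1 ≤ l) (hM : 0 < M) (hN : 0 < N)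
    (hCM : 0 ≤ CM) (hCN : 0 ≤ CN) (hMdN : M * c = N * d)
    (hB : 3 * ((c * M) * ((CM * k / M) * (CN * l / N))) ≤ 2 * B +
      (c * M) * ((CM * k / M) * (CN * l / N) + c * ((CM * k / M) * (CN * l ^ 2 / N ^ 2))
        + d * ((CM * k ^ 2 / M ^ 2) * (CN * l / N))
        + (c * M) * ((CM * k ^ 2 / M ^ 2) * (CN * l ^ 2 / N ^ 2)))) :
    (c * k * l / N) * (1 - c ^ 2 * k ^ 2 / N - c * k * l / N) * (CM * CN) ≤ B := by
  have hd : d = M * c / N := by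
    field_simp
    linarith [hMdN]
  subst hd
  have hM' : M ≠ 0 := ne_of_gt hM
  have hN' : N ≠ 0 := ne_of_gt hN
  have e3 : 3 * ((c * M) * ((CM * k / M) * (CN * l / N)))
      = (CM * CN) * (3 * c * k * l / N) := by field_simp
  have e4 : (c * M) * ((CM * k / M) * (CN * l / N) + c * ((CM * k / M) * (CN * l ^ 2 / N ^ 2))
        + (M * c / N) * ((CM * k ^ 2 / M ^ 2) * (CN * l / N))
        + (c * M) * ((CM * k ^ 2 / M ^ 2) * (CN * l ^ 2 / N ^ 2)))
      = (CM * CN) * ((c * k * l / N)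
          + (c ^ 2 * k * l ^ 2 + c ^ 2 * k ^ 2 * l + c ^ 2 * k ^ 2 * l ^ 2) / N ^ 2) := by
    field_simp; ring
  rw [e3, e4] at hB
  have hscalar : 2 * ((c * k * l / N) * (1 - c ^ 2 * k ^ 2 / N - c * k * l / N)) ≤
      3 * c * k * l / N - ((c * k * l / N)
        + (c ^ 2 * k * l ^ 2 + c ^ 2 * k ^ 2 * l + c ^ 2 * k ^ 2 * l ^ 2) / N ^ 2) := by
    rw [← sub_nonneg]
    have expand : 3 * c * k * l / N - ((c * k * l / N)
        + (c ^ 2 * k * l ^ 2 + c ^ 2 * k ^ 2 * l + c ^ 2 * k ^ 2 * l ^ 2) / N ^ 2)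
        - 2 * ((c * k * l / N) * (1 - c ^ 2 * k ^ 2 / N - c * k * l / N))
        = (c ^ 2 * k ^ 2 * l * (2 * c * k - 1) + c ^ 2 * k * l ^ 2 * (k - 1)) / N ^ 2 := by
      field_simp
      ring
    rw [expand]
    apply div_nonneg _ (by positivity)
    have h1 : 0 ≤ c ^ 2 * k ^ 2 * l * (2 * c * k - 1) := by
      apply mul_nonneg (by positivity)
      nlinarith
    have h2 : 0 ≤ c ^ 2 * k * l ^ 2 * (k - 1) := by
      apply mul_nonneg (by positivity)
      linarith
    linarith
  have hCC : 0 ≤ CM * CN := mul_nonneg hCM hCN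
  nlinarith [mul_le_mul_of_nonneg_left hscalar hCC]

set_option maxHeartbeats 2000000 in
theorem bipartite_birthday (M N c d k ℓ : ℕ) (E : Fin M → Fin N → Bool)
    (hc : ∀ i : Fin M, (univ.filter fun j => E i j).card = c)
    (hd : ∀ j : Fin N, (univ.filter fun i => E i j).card = d)
    (hk1 : 1 ≤ k) (hkM : k ≤ M) (hl1 : 1 ≤ ℓ) (hlN : ℓ ≤ N) :
    ((c : ℝ) * k * ℓ / N) * (1 - (c : ℝ) ^ 2 * (k : ℝ) ^ 2 / N - (c : ℝ) * k * ℓ / N) ≤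
      (((((univ : Finset (Fin M)).powersetCard k) ×ˢ
            ((univ : Finset (Fin N)).powersetCard ℓ)).filter
          fun p => ∃ i ∈ p.1, ∃ j ∈ p.2, E i j).card : ℝ) /
        ((((univ : Finset (Fin M)).powersetCard k).card : ℝ) *
          (((univ : Finset (Fin N)).powersetCard ℓ).card : ℝ)) := by
  have hM1 : 1 ≤ M := le_trans hk1 hkM
  have hN1 : 1 ≤ N := le_trans hl1 hlN
  have hM0 : (0 : ℝ) < M := by exact_mod_cast hM1
  have hN0 : (0 : ℝ) < N := by exact_mod_cast hN1
  set ΩL := (univ : Finset (Fin M)).powersetCard k with hΩL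
  set ΩR := (univ : Finset (Fin N)).powersetCard ℓ with hΩR
  have hΩLcard : ΩL.card = M.choose k := by
    rw [hΩL, Finset.card_powersetCard, Finset.card_univ, Fintype.card_fin]
  have hΩRcard : ΩR.card = N.choose ℓ := by
    rw [hΩR, Finset.card_powersetCard, Finset.card_univ, Fintype.card_fin]
  have hCMpos : (0 : ℝ) < (ΩL.card : ℝ) := by
    rw [hΩLcard]; exact_mod_cast Nat.choose_pos hkM
  have hCNpos : (0 : ℝ) < (ΩR.card : ℝ) := by
    rw [hΩRcard]; exact_mod_cast Nat.choose_pos hlN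
  rw [le_div_iff₀ (mul_pos hCMpos hCNpos)]
  rw [hΩLcard, hΩRcard]
  set Edg := (univ : Finset (Fin M × Fin N)).filter fun e => E e.1 e.2 with hEdg
  rcases Nat.eq_zero_or_pos c with hc0 | hc1
  · subst hc0
    have h0 : ((0 : ℕ) : ℝ) * k * ℓ / N = 0 := by norm_num
    rw [h0, zero_mul, zero_mul]
    positivity
  have hc1R : (1 : ℝ) ≤ c := by exact_mod_cast hc1
  have hk1R : (1 : ℝ) ≤ k := by exact_mod_cast hk1
  have hl1R : (1 : ℝ) ≤ ℓ := by exact_mod_cast hl1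
  -- degree facts
  have hdegL : ∀ i : Fin M, (Edg.filter fun f => f.1 = i).card = c := fun i => by
    rw [hEdg, fiberL E i, hc i]
  have hdegR : ∀ j : Fin N, (Edg.filter fun f => f.2 = j).card = d := fun j => by
    rw [hEdg, fiberR E j, hd j]
  have hEM : Edg.card = M * c := by
    rw [Finset.card_eq_sum_card_fiberwise (f := fun e => e.1) (t := univ)
      (fun e _ => Finset.mem_univ e.1)]
    simp only [hdegL, Finset.sum_const, Finset.card_univ, Fintype.card_fin, smul_eq_mul]
  have hEN : Edg.card = N * d := by
    rw [Finset.card_eq_sum_card_fiberwise (f := fun e => e.2) (t := univ)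
      (fun e _ => Finset.mem_univ e.2)]
    simp only [hdegR, Finset.sum_const, Finset.card_univ, Fintype.card_fin, smul_eq_mul]
  have hEcard : (Edg.card : ℝ) = M * c := by exact_mod_cast hEM
  have hMdN : (M : ℝ) * c = N * d := by
    have h2 : (Edg.card : ℝ) = N * d := by exact_mod_cast hEN
    rw [← hEcard, h2]
  -- ratio facts
  have hL1 : ∀ a : Fin M, ((ΩL.filter fun s => a ∈ s).card : ℝ)
      = (M.choose k : ℝ) * k / M := by
    intro a
    rw [eq_div_iff (ne_of_gt hM0)]
    exact_mod_cast count_single M k hk1 hkM a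
  have hR1 : ∀ a : Fin N, ((ΩR.filter fun s => a ∈ s).card : ℝ)
      = (N.choose ℓ : ℝ) * ℓ / N := by
    intro a
    rw [eq_div_iff (ne_of_gt hN0)]
    exact_mod_cast count_single N ℓ hl1 hlN a
  have hL2 : ∀ a b : Fin M, a ≠ b → ((ΩL.filter fun s => a ∈ s ∧ b ∈ s).card : ℝ)
      ≤ (M.choose k : ℝ) * k ^ 2 / M ^ 2 := by
    intro a b hab
    rw [le_div_iff₀ (by positivity)]
    have hfe : (ΩL.filter fun s => a ∈ s ∧ b ∈ s)
        = ΩL.filter fun s => ({a, b} : Finset (Fin M)) ⊆ s := by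
      apply Finset.filter_congr
      intro s _
      simp [Finset.insert_subset_iff]
    rw [hfe]
    exact_mod_cast count_pair M k hk1 hkM {a, b} (Finset.card_pair hab)
  have hR2 : ∀ a b : Fin N, a ≠ b → ((ΩR.filter fun s => a ∈ s ∧ b ∈ s).card : ℝ)
      ≤ (N.choose ℓ : ℝ) * ℓ ^ 2 / N ^ 2 := by
    intro a b hab
    rw [le_div_iff₀ (by positivity)]
    have hfe : (ΩR.filter fun s => a ∈ s ∧ b ∈ s)
        = ΩR.filter fun s => ({a, b} : Finset (Fin N)) ⊆ s := by
      apply Finset.filter_congr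
      intro s _
      simp [Finset.insert_subset_iff]
    rw [hfe]
    exact_mod_cast count_pair N ℓ hl1 hlN {a, b} (Finset.card_pair hab)
  have hLeq : ∀ a b : Fin M, b = a → ((ΩL.filter fun s => a ∈ s ∧ b ∈ s).card : ℝ)
      = (M.choose k : ℝ) * k / M := by
    intro a b hb
    subst hb
    have hfe : (ΩL.filter fun s => b ∈ s ∧ b ∈ s) = ΩL.filter fun s => b ∈ s := by
      apply Finset.filter_congr
      intro s _
      simp
    rw [hfe, hL1 b]
  have hReq : ∀ a b : Fin N, b = a → ((ΩR.filter fun s => a ∈ s ∧ b ∈ s).card : ℝ)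
      = (N.choose ℓ : ℝ) * ℓ / N := by
    intro a b hb
    subst hb
    have hfe : (ΩR.filter fun s => b ∈ s ∧ b ∈ s) = ΩR.filter fun s => b ∈ s := by
      apply Finset.filter_congr
      intro s _
      simp
    rw [hfe, hR1 b]
  -- value of the single-event count
  have hsingleval : ∀ e : Fin M × Fin N,
      (((ΩL ×ˢ ΩR).filter fun p => e.1 ∈ p.1 ∧ e.2 ∈ p.2).card : ℝ)
        = ((M.choose k : ℝ) * k / M) * ((N.choose ℓ : ℝ) * ℓ / N) := by
    intro e
    rw [Finset.filter_product (fun s => e.1 ∈ s) (fun s => e.2 ∈ s), Finset.card_product]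
    push_cast
    rw [hL1 e.1, hR1 e.2]
  have hpairsplit : ∀ e f : Fin M × Fin N,
      (((ΩL ×ˢ ΩR).filter fun p => (e.1 ∈ p.1 ∧ e.2 ∈ p.2) ∧ f.1 ∈ p.1 ∧ f.2 ∈ p.2).card : ℝ)
        = ((ΩL.filter fun s => e.1 ∈ s ∧ f.1 ∈ s).card : ℝ) *
          ((ΩR.filter fun s => e.2 ∈ s ∧ f.2 ∈ s).card : ℝ) := by
    intro e f
    have hfe : ((ΩL ×ˢ ΩR).filter fun p => (e.1 ∈ p.1 ∧ e.2 ∈ p.2) ∧ f.1 ∈ p.1 ∧ f.2 ∈ p.2)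
        = (ΩL ×ˢ ΩR).filter fun p => (e.1 ∈ p.1 ∧ f.1 ∈ p.1) ∧ e.2 ∈ p.2 ∧ f.2 ∈ p.2 := by
      apply Finset.filter_congr
      intro p _
      tauto
    rw [hfe, Finset.filter_product (fun s => e.1 ∈ s ∧ f.1 ∈ s) (fun s => e.2 ∈ s ∧ f.2 ∈ s),
      Finset.card_product]
    push_cast
    ring
  -- Bonferroni
  have hbonf := bonferroni Edg (ΩL ×ˢ ΩR) (fun e p => e.1 ∈ p.1 ∧ e.2 ∈ p.2)
  have hbadeq : ((ΩL ×ˢ ΩR).filter fun p => ∃ e ∈ Edg, e.1 ∈ p.1 ∧ e.2 ∈ p.2)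
      = ((ΩL ×ˢ ΩR).filter fun p => ∃ i ∈ p.1, ∃ j ∈ p.2, E i j) := by
    apply Finset.filter_congr
    intro p _
    constructor
    · rintro ⟨e, he, h1, h2⟩
      rw [hEdg, Finset.mem_filter] at he
      exact ⟨e.1, h1, e.2, h2, he.2⟩
    · rintro ⟨i, hi, j, hj, hij⟩
      exact ⟨(i, j), by rw [hEdg, Finset.mem_filter]; exact ⟨Finset.mem_univ _, hij⟩, hi, hj⟩
  rw [hbadeq] at hbonf
  have hbonfR :
      3 * ((∑ e ∈ Edg, ((ΩL ×ˢ ΩR).filter fun p => e.1 ∈ p.1 ∧ e.2 ∈ p.2).card : ℕ) : ℝ)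
      ≤ 2 * (((ΩL ×ˢ ΩR).filter fun p => ∃ i ∈ p.1, ∃ j ∈ p.2, E i j).card : ℝ)
        + ((∑ e ∈ Edg, ∑ f ∈ Edg,
            ((ΩL ×ˢ ΩR).filter fun p => (e.1 ∈ p.1 ∧ e.2 ∈ p.2) ∧ f.1 ∈ p.1 ∧ f.2 ∈ p.2).card
              : ℕ) : ℝ) := by
    exact_mod_cast hbonf
  have hS1 : ((∑ e ∈ Edg, ((ΩL ×ˢ ΩR).filter fun p => e.1 ∈ p.1 ∧ e.2 ∈ p.2).card : ℕ) : ℝ)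
      = (Edg.card : ℝ) * (((M.choose k : ℝ) * k / M) * ((N.choose ℓ : ℝ) * ℓ / N)) := by
    push_cast
    rw [Finset.sum_congr rfl fun e _ => hsingleval e, Finset.sum_const, nsmul_eq_mul]
  -- the inner sum bound
  have hinner : ∀ e ∈ Edg,
      ∑ f ∈ Edg, (((ΩL ×ˢ ΩR).filter
          fun p => (e.1 ∈ p.1 ∧ e.2 ∈ p.2) ∧ f.1 ∈ p.1 ∧ f.2 ∈ p.2).card : ℝ)
        ≤ ((M.choose k : ℝ) * k / M) * ((N.choose ℓ : ℝ) * ℓ / N)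
          + c * (((M.choose k : ℝ) * k / M) * ((N.choose ℓ : ℝ) * ℓ ^ 2 / N ^ 2))
          + d * (((M.choose k : ℝ) * k ^ 2 / M ^ 2) * ((N.choose ℓ : ℝ) * ℓ / N))
          + (M * c) * (((M.choose k : ℝ) * k ^ 2 / M ^ 2) *
              ((N.choose ℓ : ℝ) * ℓ ^ 2 / N ^ 2)) := by
    intro e _
    rw [← Finset.sum_filter_add_sum_filter_not Edg (fun f => f.1 = e.1),
      ← Finset.sum_filter_add_sum_filter_not (Edg.filter fun f => f.1 = e.1)
        (fun f => f.2 = e.2),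
      ← Finset.sum_filter_add_sum_filter_not (Edg.filter fun f => ¬f.1 = e.1)
        (fun f => f.2 = e.2)]
    have hT11 : ∑ f ∈ (Edg.filter fun f => f.1 = e.1).filter (fun f => f.2 = e.2),
        (((ΩL ×ˢ ΩR).filter
          fun p => (e.1 ∈ p.1 ∧ e.2 ∈ p.2) ∧ f.1 ∈ p.1 ∧ f.2 ∈ p.2).card : ℝ)
          ≤ 1 * (((M.choose k : ℝ) * k / M) * ((N.choose ℓ : ℝ) * ℓ / N)) := by
      refine le_trans (Finset.sum_le_card_nsmul _ _
        (((M.choose k : ℝ) * k / M) * ((N.choose ℓ : ℝ) * ℓ / N)) ?_) ?_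
      · intro f hf
        simp only [Finset.mem_filter] at hf
        rw [hpairsplit e f, hLeq e.1 f.1 hf.1.2, hReq e.2 f.2 hf.2]
      · rw [nsmul_eq_mul]
        refine mul_le_mul_of_nonneg_right ?_ (by positivity)
        have hcard : ((Edg.filter fun f => f.1 = e.1).filter (fun f => f.2 = e.2)).card ≤ 1 := by
          refine Finset.card_le_one.mpr fun a ha b hb => ?_
          simp only [Finset.mem_filter] at ha hb
          exact Prod.ext (ha.1.2.trans hb.1.2.symm) (ha.2.trans hb.2.symm)
        exact_mod_cast hcard
    have hT12 : ∑ f ∈ (Edg.filter fun f => f.1 = e.1).filter (fun f => ¬f.2 = e.2),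
        (((ΩL ×ˢ ΩR).filter
          fun p => (e.1 ∈ p.1 ∧ e.2 ∈ p.2) ∧ f.1 ∈ p.1 ∧ f.2 ∈ p.2).card : ℝ)
          ≤ c * (((M.choose k : ℝ) * k / M) * ((N.choose ℓ : ℝ) * ℓ ^ 2 / N ^ 2)) := by
      refine le_trans (Finset.sum_le_card_nsmul _ _
        (((M.choose k : ℝ) * k / M) * ((N.choose ℓ : ℝ) * ℓ ^ 2 / N ^ 2)) ?_) ?_
      · intro f hf
        simp only [Finset.mem_filter] at hf
        rw [hpairsplit e f, hLeq e.1 f.1 hf.1.2]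
        exact mul_le_mul_of_nonneg_left (hR2 e.2 f.2 fun h => hf.2 h.symm) (by positivity)
      · rw [nsmul_eq_mul]
        refine mul_le_mul_of_nonneg_right ?_ (by positivity)
        have hcard : ((Edg.filter fun f => f.1 = e.1).filter (fun f => ¬f.2 = e.2)).card ≤ c := by
          refine le_trans (Finset.card_le_card (Finset.filter_subset _ _)) ?_
          exact le_of_eq (hdegL e.1)
        exact_mod_cast hcard
    have hT21 : ∑ f ∈ (Edg.filter fun f => ¬f.1 = e.1).filter (fun f => f.2 = e.2),
        (((ΩL ×ˢ ΩR).filter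
          fun p => (e.1 ∈ p.1 ∧ e.2 ∈ p.2) ∧ f.1 ∈ p.1 ∧ f.2 ∈ p.2).card : ℝ)
          ≤ d * (((M.choose k : ℝ) * k ^ 2 / M ^ 2) * ((N.choose ℓ : ℝ) * ℓ / N)) := by
      refine le_trans (Finset.sum_le_card_nsmul _ _
        (((M.choose k : ℝ) * k ^ 2 / M ^ 2) * ((N.choose ℓ : ℝ) * ℓ / N)) ?_) ?_
      · intro f hf
        simp only [Finset.mem_filter] at hf
        rw [hpairsplit e f, hReq e.2 f.2 hf.2]
        exact mul_le_mul_of_nonneg_right (hL2 e.1 f.1 fun h => hf.1.2 h.symm) (by positivity)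
      · rw [nsmul_eq_mul]
        refine mul_le_mul_of_nonneg_right ?_ (by positivity)
        have hsub : (Edg.filter fun f => ¬f.1 = e.1).filter (fun f => f.2 = e.2)
            ⊆ Edg.filter fun f => f.2 = e.2 := by
          intro f hf
          simp only [Finset.mem_filter] at hf ⊢
          exact ⟨hf.1.1, hf.2⟩
        have hcard := le_trans (Finset.card_le_card hsub) (le_of_eq (hdegR e.2))
        exact_mod_cast hcard
    have hT22 : ∑ f ∈ (Edg.filter fun f => ¬f.1 = e.1).filter (fun f => ¬f.2 = e.2),
        (((ΩL ×ˢ ΩR).filter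
          fun p => (e.1 ∈ p.1 ∧ e.2 ∈ p.2) ∧ f.1 ∈ p.1 ∧ f.2 ∈ p.2).card : ℝ)
          ≤ (M * c) * (((M.choose k : ℝ) * k ^ 2 / M ^ 2) *
              ((N.choose ℓ : ℝ) * ℓ ^ 2 / N ^ 2)) := by
      refine le_trans (Finset.sum_le_card_nsmul _ _
        (((M.choose k : ℝ) * k ^ 2 / M ^ 2) * ((N.choose ℓ : ℝ) * ℓ ^ 2 / N ^ 2)) ?_) ?_
      · intro f hf
        simp only [Finset.mem_filter] at hf
        rw [hpairsplit e f]
        exact mul_le_mul (hL2 e.1 f.1 fun h => hf.1.2 h.symm)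
          (hR2 e.2 f.2 fun h => hf.2 h.symm) (by positivity) (by positivity)
      · rw [nsmul_eq_mul]
        refine mul_le_mul_of_nonneg_right ?_ (by positivity)
        have hcard : ((Edg.filter fun f => ¬f.1 = e.1).filter (fun f => ¬f.2 = e.2)).card
            ≤ Edg.card :=
          le_trans (Finset.card_le_card (Finset.filter_subset _ _))
            (Finset.card_le_card (Finset.filter_subset _ _))
        calc (((Edg.filter fun f => ¬f.1 = e.1).filter (fun f => ¬f.2 = e.2)).card : ℝ)
            ≤ (Edg.card : ℝ) := by exact_mod_cast hcard
          _ = M * c := hEcard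
    linarith [hT11, hT12, hT21, hT22]
  have hS2 : ((∑ e ∈ Edg, ∑ f ∈ Edg,
        ((ΩL ×ˢ ΩR).filter fun p => (e.1 ∈ p.1 ∧ e.2 ∈ p.2) ∧ f.1 ∈ p.1 ∧ f.2 ∈ p.2).card
          : ℕ) : ℝ)
      ≤ (M * c) * (((M.choose k : ℝ) * k / M) * ((N.choose ℓ : ℝ) * ℓ / N)
          + c * (((M.choose k : ℝ) * k / M) * ((N.choose ℓ : ℝ) * ℓ ^ 2 / N ^ 2))
          + d * (((M.choose k : ℝ) * k ^ 2 / M ^ 2) * ((N.choose ℓ : ℝ) * ℓ / N))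
          + (M * c) * (((M.choose k : ℝ) * k ^ 2 / M ^ 2) *
              ((N.choose ℓ : ℝ) * ℓ ^ 2 / N ^ 2))) := by
    push_cast
    refine le_trans (Finset.sum_le_card_nsmul _ _ _ hinner) ?_
    rw [nsmul_eq_mul, hEcard]
  -- final arithmetic
  have hBineq : 3 * ((c : ℝ) * M * (((M.choose k : ℝ) * k / M) * ((N.choose ℓ : ℝ) * ℓ / N)))
      ≤ 2 * (((ΩL ×ˢ ΩR).filter fun p => ∃ i ∈ p.1, ∃ j ∈ p.2, E i j).card : ℝ)
        + (c : ℝ) * M * (((M.choose k : ℝ) * k / M) * ((N.choose ℓ : ℝ) * ℓ / N)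
          + c * (((M.choose k : ℝ) * k / M) * ((N.choose ℓ : ℝ) * ℓ ^ 2 / N ^ 2))
          + d * (((M.choose k : ℝ) * k ^ 2 / M ^ 2) * ((N.choose ℓ : ℝ) * ℓ / N))
          + c * M * (((M.choose k : ℝ) * k ^ 2 / M ^ 2) *
              ((N.choose ℓ : ℝ) * ℓ ^ 2 / N ^ 2))) := by
    rw [hS1, hEcard] at hbonfR
    ring_nf at hbonfR hS2 ⊢
    linarith [hbonfR, hS2]
  obtain ⟨B, hBdef⟩ : ∃ B : ℝ,
      B = (((ΩL ×ˢ ΩR).filter fun p => ∃ i ∈ p.1, ∃ j ∈ p.2, E i j).card : ℝ) := ⟨_, rfl⟩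
  rw [← hBdef] at hBineq ⊢
  exact final_arith M N c d k ℓ (M.choose k) (N.choose ℓ) B
    hc1R hk1R hl1R hM0 hN0 (Nat.cast_nonneg _) (Nat.cast_nonneg _) hMdN hBineq
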